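/- Suppose the Hessian H = ∇²f(x) is symmetric with rank r, eigenvalues λ_1 ≥ ⋯ ≥ λ_r with orthonormal eigenvectors v_1,…,v_r, and ‖H‖ ≤ M. Let P ∈ R^{n×p} satisfy ‖Pᵀv_r‖ ≥ 1−α and (v̂_iᵀ v̂_r)² ≤ 4α² for all i < r, where v̂_i = Pᵀv_i and α ∈ (0,1). If −λ_r ≥ ε > 0 and θ := (1−α)² − 4M(r−1)α²/(ε(1−α)²) > 0, then −λ_min(PᵀHP) ≥ θ·ε. -/

import Mathlib

open scoped RealInnerProductSpace Matrix

private lemma vecMulVec_mulVec' {n m : ℕ} (a : Fin n → ℝ) (b x : Fin m → ℝ) :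
    Matrix.vecMulVec a b *ᵥ x = (b ⬝ᵥ x) • a := by
  ext i
  simp [Matrix.vecMulVec, Matrix.mulVec, dotProduct, Finset.mul_sum, mul_assoc,
    mul_comm, mul_left_comm]



private lemma sum_mulVec' {m n : ℕ} {ι : Type*} (s : Finset ι)
    (A : ι → Matrix (Fin m) (Fin n) ℝ) (x : Fin n → ℝ) :
    (∑ i ∈ s, A i) *ᵥ x = ∑ i ∈ s, (A i) *ᵥ x := by
  induction s using Finset.cons_induction with
  | empty => simp [Matrix.zero_mulVec]
  | cons a s ha ih => simp [Matrix.add_mulVec, ih]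

private lemma dotProduct_sum' {n : ℕ} {ι : Type*} (s : Finset ι)
    (x : Fin n → ℝ) (y : ι → Fin n → ℝ) :
    x ⬝ᵥ (∑ i ∈ s, y i) = ∑ i ∈ s, x ⬝ᵥ y i := by
  induction s using Finset.cons_induction with
  | empty => simp
  | cons a s ha ih => simp [dotProduct_add, ih]

private lemma rayleigh_min' {p : ℕ} [NeZero p] (A : Matrix (Fin p) (Fin p) ℝ)
    (hA : A.IsHermitian) (x : Fin p → ℝ) :
    (⨅ j : Fin p, hA.eigenvalues j) * (x ⬝ᵥ x) ≤ x ⬝ᵥ (A *ᵥ x) := by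
  set μ := ⨅ j : Fin p, hA.eigenvalues j with hμ
  have hle : ∀ j, μ ≤ hA.eigenvalues j := fun j => ciInf_le (Finite.bddBelow_range _) j
  have hB : (A - μ • 1).PosSemidef := by
    have hU : (hA.eigenvectorUnitary : Matrix (Fin p) (Fin p) ℝ) *
        (star hA.eigenvectorUnitary : Matrix (Fin p) (Fin p) ℝ) = 1 := by
      simpa using hA.eigenvectorUnitary.2.2
    have hD : Matrix.diagonal (fun j => hA.eigenvalues j - μ)
        = Matrix.diagonal (RCLike.ofReal ∘ hA.eigenvalues) - μ • 1 := by
      ext i j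
      by_cases h : i = j <;> simp [Matrix.diagonal, h, Matrix.one_apply]
    have key : A - μ • 1 = (hA.eigenvectorUnitary : Matrix (Fin p) (Fin p) ℝ) *
        Matrix.diagonal (fun j => hA.eigenvalues j - μ) *
        (hA.eigenvectorUnitary : Matrix (Fin p) (Fin p) ℝ)ᴴ := by
      rw [hD, Matrix.mul_sub, Matrix.sub_mul, mul_assoc]
      have h1 : (hA.eigenvectorUnitary : Matrix (Fin p) (Fin p) ℝ) * (μ • 1) *
          (hA.eigenvectorUnitary : Matrix (Fin p) (Fin p) ℝ)ᴴ = μ • 1 := by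
        rw [Matrix.mul_smul, Matrix.smul_mul, mul_one]
        show μ • ((hA.eigenvectorUnitary : Matrix (Fin p) (Fin p) ℝ) *
          (star hA.eigenvectorUnitary : Matrix (Fin p) (Fin p) ℝ)) = μ • 1
        rw [hU]
      rw [h1, ← mul_assoc]
      have hst : (hA.eigenvectorUnitary : Matrix (Fin p) (Fin p) ℝ)ᴴ
          = star (hA.eigenvectorUnitary : Matrix (Fin p) (Fin p) ℝ) := rfl
      rw [hst]; nth_rewrite 1 [hA.spectral_theorem]; rfl
    rw [key]
    exact (Matrix.posSemidef_diagonal_iff.2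
      (fun j => sub_nonneg.2 (hle j))).mul_mul_conjTranspose_same _
  have h2 := hB.dotProduct_mulVec_nonneg x
  have h3 : star x ⬝ᵥ ((A - μ • 1) *ᵥ x) = x ⬝ᵥ (A *ᵥ x) - μ * (x ⬝ᵥ x) := by
    simp [Matrix.sub_mulVec, Matrix.smul_mulVec, dotProduct_sub,
      dotProduct_smul, smul_eq_mul]
  rw [h3] at h2
  linarith

set_option maxHeartbeats 1000000 in
theorem stmt_2 {n p r : ℕ} [NeZero p] (hr : 0 < r)
    (H : Matrix (Fin n) (Fin n) ℝ) (hH : H.IsHermitian) (hrank : H.rank = r)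
    (lam : Fin r → ℝ) (hlam : Antitone lam)
    (v : Fin r → EuclideanSpace ℝ (Fin n)) (hv : Orthonormal ℝ v)
    (hdecomp : H = ∑ i : Fin r, lam i • Matrix.vecMulVec (v i) (v i))
    (M : ℝ) (hM : ‖Matrix.toEuclideanCLM (𝕜 := ℝ) H‖ ≤ M)
    (P : Matrix (Fin n) (Fin p) ℝ)
    (vhat : Fin r → EuclideanSpace ℝ (Fin p))
    (hvhat : ∀ i, vhat i = (WithLp.equiv 2 (Fin p → ℝ)).symm (Matrix.mulVec Pᵀ (v i)))
    (last : Fin r) (hlast : (last : ℕ) = r - 1)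
    (α : ℝ) (hα : 0 < α) (hα1 : α < 1)
    (halign : 1 - α ≤ ‖vhat last‖)
    (hortho : ∀ i ∈ Finset.univ.erase last, (⟪vhat i, vhat last⟫) ^ 2 ≤ 4 * α ^ 2)
    (ε : ℝ) (hε : 0 < ε) (hcurv : ε ≤ -lam last)
    (θ : ℝ) (hθdef : θ = (1 - α) ^ 2 - 4 * M * (r - 1) * α ^ 2 / (ε * (1 - α) ^ 2))
    (hθ : 0 < θ)
    (hPHP : (Pᵀ * H * P).IsHermitian) :
    θ * ε ≤ -(⨅ j : Fin p, hPHP.eigenvalues j) := by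
  have hvdot : ∀ i j, dotProduct (α := ℝ) (v i) (v j) = if i = j then (1:ℝ) else 0 := by
    intro i j
    have h := orthonormal_iff_ite.mp hv i j
    simpa [PiLp.inner_apply, dotProduct, mul_comm] using h
  -- H acts on v i as lam i
  have hHv : ∀ i, H *ᵥ v i = lam i • (v i : Fin n → ℝ) := by
    intro i
    rw [hdecomp, sum_mulVec']
    have h1 : ∀ j, (lam j • Matrix.vecMulVec (v j) (v j)) *ᵥ v i
        = (lam j * dotProduct (α := ℝ) (v j) (v i)) • (v j : Fin n → ℝ) := by
      intro j
      rw [Matrix.smul_mulVec, vecMulVec_mulVec', smul_smul]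
    have hcollapse : ∀ j, ((lam j * dotProduct (α := ℝ) (v j) (v i)) • (v j : Fin n → ℝ))
        = if j = i then lam i • (v i : Fin n → ℝ) else 0 := by
      intro j
      by_cases h : j = i <;> simp [hvdot, h]
    simp only [h1, hcollapse, Finset.sum_ite_eq', Finset.mem_univ, if_true]
  -- eigenvalue bound
  have hM0 : 0 ≤ M := le_trans (norm_nonneg _) hM
  have hlamM : ∀ i, |lam i| ≤ M := by
    intro i
    have h1 : Matrix.toEuclideanCLM (𝕜 := ℝ) H (v i) = lam i • v i := by
      show (WithLp.equiv 2 (Fin n → ℝ)).symm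
          (Matrix.toLin' H (WithLp.equiv 2 (Fin n → ℝ) (v i))) = lam i • v i
      rw [Matrix.toLin'_apply]
      show (WithLp.equiv 2 (Fin n → ℝ)).symm (H *ᵥ v i) = lam i • v i
      rw [hHv]
      rfl
    have h3 : ‖Matrix.toEuclideanCLM (𝕜 := ℝ) H (v i)‖
        ≤ ‖Matrix.toEuclideanCLM (𝕜 := ℝ) H‖ * ‖v i‖ :=
      (Matrix.toEuclideanCLM (𝕜 := ℝ) H).le_opNorm _
    rw [h1, norm_smul, hv.1 i, Real.norm_eq_abs] at h3
    simpa using le_trans h3 (by nlinarith [norm_nonneg (Matrix.toEuclideanCLM (𝕜 := ℝ) H)])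
  -- the test vector
  set w : Fin p → ℝ := Pᵀ *ᵥ v last with hw
  set c : Fin r → ℝ := fun i => dotProduct (Pᵀ *ᵥ v i) w with hc
  have hcinner : ∀ i, ⟪vhat i, vhat last⟫ = c i := by
    intro i
    rw [hvhat i, hvhat last]
    simp [PiLp.inner_apply, dotProduct, hc, hw, mul_comm]
  set S : ℝ := ‖vhat last‖ with hS
  have hSpos : 0 < S := lt_of_lt_of_le (by linarith) halign
  have hclast : c last = S ^ 2 := by
    rw [← hcinner, hS, real_inner_self_eq_norm_sq]
  have hww : w ⬝ᵥ w = S ^ 2 := by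
    rw [← hclast]
  -- quadratic form computation
  have hQ : w ⬝ᵥ ((Pᵀ * H * P) *ᵥ w) = ∑ i : Fin r, lam i * (c i) ^ 2 := by
    have e1 : (Pᵀ * H * P) *ᵥ w = Pᵀ *ᵥ (H *ᵥ (P *ᵥ w)) := by
      rw [← Matrix.mulVec_mulVec, ← Matrix.mulVec_mulVec]
    rw [e1, Matrix.dotProduct_mulVec w Pᵀ, Matrix.vecMul_transpose]
    set z : Fin n → ℝ := P *ᵥ w with hz
    have e2 : ∀ i, dotProduct (α := ℝ) (v i) z = c i := by
      intro i
      rw [hz, hc]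
      show dotProduct (α := ℝ) (v i) (P *ᵥ w) = dotProduct (Pᵀ *ᵥ v i) w
      rw [Matrix.dotProduct_mulVec, Matrix.mulVec_transpose]
    rw [hdecomp, sum_mulVec', dotProduct_sum']
    congr 1
    ext i
    rw [Matrix.smul_mulVec, vecMulVec_mulVec', dotProduct_smul,
      dotProduct_smul, smul_eq_mul, smul_eq_mul, e2, dotProduct_comm, e2]
    ring
  -- bound the sum
  have hcard : (Finset.univ.erase last).card = r - 1 := by
    rw [Finset.card_erase_of_mem (Finset.mem_univ _), Finset.card_univ, Fintype.card_fin]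
  have hsum : ∑ i ∈ Finset.univ.erase last, lam i * (c i) ^ 2 ≤ (r - 1 : ℝ) * (4 * M * α ^ 2) := by
    have hterm : ∀ i ∈ Finset.univ.erase last, lam i * (c i) ^ 2 ≤ 4 * M * α ^ 2 := by
      intro i hi
      have h1 : (c i) ^ 2 ≤ 4 * α ^ 2 := by rw [← hcinner]; exact hortho i hi
      have h2 := hlamM i
      nlinarith [sq_nonneg (c i), abs_le.mp h2]
    calc ∑ i ∈ Finset.univ.erase last, lam i * (c i) ^ 2
        ≤ ∑ _i ∈ Finset.univ.erase last, (4 * M * α ^ 2) := Finset.sum_le_sum hterm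
      _ = ((r - 1 : ℕ) : ℝ) * (4 * M * α ^ 2) := by rw [Finset.sum_const, hcard]; simp [mul_comm]
      _ = (r - 1 : ℝ) * (4 * M * α ^ 2) := by
          congr 1
          rw [Nat.cast_sub hr]; simp
  have hsplit : ∑ i : Fin r, lam i * (c i) ^ 2
      = lam last * (c last) ^ 2 + ∑ i ∈ Finset.univ.erase last, lam i * (c i) ^ 2 :=
    (Finset.add_sum_erase Finset.univ (fun i => lam i * c i ^ 2) (Finset.mem_univ last)).symm
  -- main estimate
  set μ : ℝ := ⨅ j : Fin p, hPHP.eigenvalues j with hμ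
  have hray := rayleigh_min' (Pᵀ * H * P) hPHP w
  rw [hQ, hww] at hray
  set K : ℝ := 4 * M * (r - 1 : ℝ) * α ^ 2 with hK
  have hr1 : (1:ℝ) ≤ (r:ℝ) := by exact_mod_cast hr
  have hK0 : 0 ≤ K := by
    rw [hK]
    apply mul_nonneg (mul_nonneg (by linarith) (by linarith)) (sq_nonneg _)
  have hQle : ∑ i : Fin r, lam i * (c i) ^ 2 ≤ -ε * (S ^ 2) ^ 2 + K := by
    rw [hsplit, hclast]
    have h1 : lam last * (S ^ 2) ^ 2 ≤ -ε * (S ^ 2) ^ 2 := by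
      nlinarith [sq_nonneg (S ^ 2)]
    have hKeq : (r - 1 : ℝ) * (4 * M * α ^ 2) = K := by rw [hK]; ring
    linarith [hsum]
  -- finish numerically
  set β : ℝ := (1 - α) ^ 2 with hβ
  have hβpos : 0 < β := by rw [hβ]; exact pow_pos (by linarith) 2
  have hβS : β ≤ S ^ 2 := by
    rw [hβ]; nlinarith
  have hne : ε * β ≠ 0 := mul_ne_zero hε.ne' hβpos.ne'
  have hθε : θ * (ε * β) = ε * β ^ 2 - K := by
    rw [hθdef, sub_mul, div_mul_cancel₀ _ hne]
    ring
  have hθβ : θ ≤ β := by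
    rw [hθdef]
    have h0 : 0 ≤ K / (ε * β) := div_nonneg hK0 (mul_nonneg hε.le hβpos.le)
    linarith
  have hμle : μ * S ^ 2 ≤ -ε * (S ^ 2) ^ 2 + K := le_trans hray hQle
  have hAx : 0 ≤ ε * (S ^ 2 - β) * (S ^ 2 + β - θ) :=
    mul_nonneg (mul_nonneg hε.le (by linarith)) (by linarith)
  have hB : θ * ε * S ^ 2 ≤ ε * (S ^ 2) ^ 2 - K := by nlinarith [hAx, hθε]
  have hC : μ * S ^ 2 ≤ (-(θ * ε)) * S ^ 2 := by linarith [hμle, hB]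
  have hS2 : 0 < S ^ 2 := by nlinarith
  linarith [le_of_mul_le_mul_right hC hS2]
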